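/- Let G = Σ_{m≥0} g_m u^m be a formal power series over ℝ with g_m ≥ 0 for all m, and let f = Σ_{k≥1} f_k ξ^k be the unique formal power series with zero constant coefficient satisfying f′ = G(f). Let C = Σ_{k≥1} c_k ξ^k be a formal power series with zero constant coefficient and c_k ≥ 0 for all k, and assume the coefficientwise inequality: for every N ≥ 0, the coefficient of ξ^N in C′ is at most the coefficient of ξ^N in G(C). Then c_k ≤ f_k for all k ≥ 1. -/

import Mathlib

/-- Formal substitution `G(C) = Σ_m g_m C^m` of a power series `C` with zero constant
coefficient into `G`, defined coefficientwise. -/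
noncomputable def pComp (G f : PowerSeries ℝ) : PowerSeries ℝ :=
  PowerSeries.mk fun N =>
    ∑ m ∈ Finset.range (N + 1), (PowerSeries.coeff m G) * (PowerSeries.coeff N (f ^ m))

/-- The formal derivative of a power series. -/
noncomputable def pDeriv (f : PowerSeries ℝ) : PowerSeries ℝ :=
  PowerSeries.mk fun N => ((N : ℝ) + 1) * PowerSeries.coeff (N + 1) f

/-- Majorant comparison: if `G` has nonnegative coefficients, `f` is the formal solution
of `f′ = G(f)` with zero constant coefficient, and `C` has nonnegative coefficients, zero
constant coefficient, and satisfies `coeff N C′ ≤ coeff N G(C)` for all `N`, then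
`c_k ≤ f_k` for all `k ≥ 1`. -/
theorem stmt_9 (G f C : PowerSeries ℝ)
    (hG : ∀ m, 0 ≤ PowerSeries.coeff m G)
    (hf0 : PowerSeries.constantCoeff f = 0)
    (hfODE : pDeriv f = pComp G f)
    (hC0 : PowerSeries.constantCoeff C = 0)
    (hCnonneg : ∀ k, 0 ≤ PowerSeries.coeff k C)
    (hmaj : ∀ N, PowerSeries.coeff N (pDeriv C) ≤ PowerSeries.coeff N (pComp G C)) :
    ∀ k, 1 ≤ k → PowerSeries.coeff k C ≤ PowerSeries.coeff k f := by
  -- auxiliary: monotonicity of powers coefficientwise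
  have powle : ∀ (m N : ℕ),
      (∀ j ≤ N, 0 ≤ PowerSeries.coeff j C ∧
        PowerSeries.coeff j C ≤ PowerSeries.coeff j f) →
      0 ≤ PowerSeries.coeff N (C ^ m) ∧
        PowerSeries.coeff N (C ^ m) ≤ PowerSeries.coeff N (f ^ m) := by
    intro m
    induction m with
    | zero =>
        intro N _
        simp only [pow_zero, PowerSeries.coeff_one]
        constructor
        · positivity
        · exact le_refl _
    | succ m ih =>
        intro N h
        have hmul : ∀ g : PowerSeries ℝ,
            PowerSeries.coeff N (g ^ (m + 1)) =
              ∑ p ∈ Finset.HasAntidiagonal.antidiagonal N,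
                PowerSeries.coeff p.1 (g ^ m) * PowerSeries.coeff p.2 g := by
          intro g
          rw [pow_succ, PowerSeries.coeff_mul]
        constructor
        · rw [hmul]
          apply Finset.sum_nonneg
          intro p hp
          have hp1 : p.1 ≤ N := by
            have := Finset.HasAntidiagonal.antidiagonal.fst_le hp
            omega
          have hp2 : p.2 ≤ N := by
            have := Finset.HasAntidiagonal.antidiagonal.snd_le hp
            omega
          exact mul_nonneg (ih p.1 (fun j hj => h j (hj.trans hp1))).1 (h p.2 hp2).1
        · rw [hmul, hmul]
          apply Finset.sum_le_sum
          intro p hp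
          have hp1 : p.1 ≤ N := by
            have := Finset.HasAntidiagonal.antidiagonal.fst_le hp
            omega
          have hp2 : p.2 ≤ N := by
            have := Finset.HasAntidiagonal.antidiagonal.snd_le hp
            omega
          have h1 := ih p.1 (fun j hj => h j (hj.trans hp1))
          have h2 := h p.2 hp2
          exact mul_le_mul h1.2 h2.2 h2.1 (h1.1.trans h1.2)
  intro k
  induction k using Nat.strong_induction_on with
  | _ k IH =>
    intro hk
    obtain ⟨N, rfl⟩ : ∃ N, k = N + 1 := ⟨k - 1, by omega⟩
    have hcoeffs : ∀ j ≤ N, 0 ≤ PowerSeries.coeff j C ∧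
        PowerSeries.coeff j C ≤ PowerSeries.coeff j f := by
      intro j hj
      refine ⟨hCnonneg j, ?_⟩
      rcases Nat.eq_zero_or_pos j with rfl | hj1
      · simp only [PowerSeries.coeff_zero_eq_constantCoeff, hC0, hf0]; exact le_refl 0
      · exact IH j (by omega) hj1
    have h1 := hmaj N
    have h2 : PowerSeries.coeff N (pComp G C) ≤ PowerSeries.coeff N (pComp G f) := by
      simp only [pComp, PowerSeries.coeff_mk]
      apply Finset.sum_le_sum
      intro m _
      exact mul_le_mul_of_nonneg_left (powle m N hcoeffs).2 (hG m)
    have h3 : PowerSeries.coeff N (pComp G f) = PowerSeries.coeff N (pDeriv f) := by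
      rw [hfODE]
    have h4 : ((N : ℝ) + 1) * PowerSeries.coeff (N + 1) C ≤
        ((N : ℝ) + 1) * PowerSeries.coeff (N + 1) f := by
      have := (h1.trans h2).trans_eq h3
      simpa [pDeriv, PowerSeries.coeff_mk] using this
    have hpos : (0 : ℝ) < (N : ℝ) + 1 := by positivity
    exact le_of_mul_le_mul_left h4 hpos
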